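/- Suppose real numbers α_k ≥ 0 for k = 1,...,K satisfy Σ_k α_k = m and Σ_k α_k/C(n,k) ≤ 1, where K = ⌊n/2⌋. If three indices k1 < k2 < k3 exist with α_{k1} > 0 and α_{k3} > 0 and k3 > k1 + 1, then the vector (α_k) does not minimize Σ_k k·α_k subject to these constraints; i.e., any minimizer has support consisting of at most two consecutive indices. -/

import Mathlib

lemma lp_aux_id (n k : ℕ) (h : k < n) :
    ((n.choose (k+1) : ℝ)) * (k+1) = (n.choose k : ℝ) * ((n : ℝ) - k) := by
  have h1 := Nat.choose_succ_right_eq n k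
  have : ((n.choose (k+1) * (k+1) : ℕ) : ℝ) = ((n.choose k * (n - k) : ℕ) : ℝ) := by
    exact_mod_cast congrArg (fun x : ℕ => (x : ℝ)) h1
  push_cast [Nat.cast_sub h.le] at this
  linarith [this]

lemma lp_aux_step (n k : ℕ) (h : k + 1 ≤ n / 2) :
    ((n.choose (k+1) : ℝ))⁻¹ < ((n.choose k : ℝ))⁻¹ := by
  have h2 : 2 * (k + 1) ≤ n := by omega
  have ha : 0 < (n.choose k : ℝ) := by
    exact_mod_cast Nat.choose_pos (by omega : k ≤ n)
  have hb : 0 < (n.choose (k+1) : ℝ) := by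
    exact_mod_cast Nat.choose_pos (by omega : k + 1 ≤ n)
  have hid := lp_aux_id n k (by omega)
  have hab : (n.choose k : ℝ) < (n.choose (k+1) : ℝ) := by
    have hk : (k : ℝ) + 2 ≤ (n : ℝ) - k := by
      have : (2 * (k+1) : ℝ) ≤ n := by exact_mod_cast h2
      linarith
    nlinarith
  exact inv_strictAnti₀ ha hab

lemma lp_aux_convex (n k : ℕ) (h : k + 2 ≤ n / 2) :
    ((n.choose (k+1) : ℝ))⁻¹ - ((n.choose (k+2) : ℝ))⁻¹ <
      ((n.choose k : ℝ))⁻¹ - ((n.choose (k+1) : ℝ))⁻¹ := by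
  have h2 : 2 * (k + 2) ≤ n := by omega
  have ha : 0 < (n.choose k : ℝ) := by
    exact_mod_cast Nat.choose_pos (by omega : k ≤ n)
  have hb : 0 < (n.choose (k+1) : ℝ) := by
    exact_mod_cast Nat.choose_pos (by omega : k + 1 ≤ n)
  have hc : 0 < (n.choose (k+2) : ℝ) := by
    exact_mod_cast Nat.choose_pos (by omega : k + 2 ≤ n)
  have hid1 := lp_aux_id n k (by omega)
  have hid2 := lp_aux_id n (k+1) (by omega)
  push_cast at hid2
  set a := (n.choose k : ℝ)
  set b := (n.choose (k+1) : ℝ)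
  set c := (n.choose (k+2) : ℝ)
  have hx : (k : ℝ) + 4 ≤ (n : ℝ) := by
    have : (2 * (k+2) : ℝ) ≤ n := by exact_mod_cast h2
    linarith
  -- goal reduces to b*c + a*b > 2*a*c
  have key : 2 * a * c < b * c + a * b := by
    -- intermediate: b*(n-k-1) + a*(k+2) > 2*a*(n-k-1)
    have h1 : 2 * a * ((n:ℝ) - k - 1) < b * ((n:ℝ) - k - 1) + a * ((k:ℝ)+2) := by
      have hp : (0:ℝ) < (k:ℝ) + 1 := by positivity
      rw [← mul_lt_mul_iff_of_pos_right hp]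
      nlinarith [sq_nonneg ((k:ℝ) + 1 - ((n:ℝ) - k - 1)), hid1]
    have hq : (0:ℝ) < (k:ℝ) + 2 := by positivity
    rw [← mul_lt_mul_iff_of_pos_right hq]
    nlinarith [hid2, mul_pos hb (sub_pos.mpr (show (1:ℝ) < (n:ℝ) - k by linarith)), h1, mul_lt_mul_of_pos_left h1 hb]
  rw [sub_lt_sub_iff]
  simp only [inv_eq_one_div]
  rw [div_add_div _ _ (ne_of_gt hb) (ne_of_gt hb), div_add_div _ _ (ne_of_gt ha) (ne_of_gt hc),
    div_lt_div_iff₀ (by positivity) (by positivity)] <;> try nlinarith [key, mul_pos ha hb, mul_pos hb hc, mul_pos ha hc, mul_pos (mul_pos ha hb) hc]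

lemma lp_aux_anti (n : ℕ) : ∀ j i : ℕ, i < j → j + 1 ≤ n / 2 →
    ((n.choose j : ℝ))⁻¹ - ((n.choose (j+1) : ℝ))⁻¹ <
      ((n.choose i : ℝ))⁻¹ - ((n.choose (i+1) : ℝ))⁻¹ := by
  intro j
  induction j with
  | zero => intro i hi; omega
  | succ j ih =>
    intro i hi hj
    have hc := lp_aux_convex n j (by omega)
    rcases Nat.lt_or_ge i j with h | h
    · exact lt_trans (by exact_mod_cast hc) (ih i h (by omega))
    · have : i = j := by omega
      subst this
      exact_mod_cast hc

/-- If a feasible point of the linear program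
`min ∑ k·α_k  s.t.  α_k ≥ 0, ∑ α_k = m, ∑ α_k / C(n,k) ≤ 1` (indices `k ∈ {1,...,⌊n/2⌋}`)
has three indices `k₁ < k₂ < k₃` with `α_{k₁} > 0`, `α_{k₃} > 0` and `k₃ > k₁ + 1`,
then it is not a minimizer: some other feasible point has strictly smaller objective. -/
theorem lp_minimizer_support_consecutive (n : ℕ) (hn : 0 < n) (m : ℝ) (hm : 0 < m)
    (hmle : m ≤ (n.choose (n / 2) : ℝ))
    (α : ℕ → ℝ) (hα0 : ∀ k ∈ Finset.Icc 1 (n / 2), 0 ≤ α k)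
    (hsum : ∑ k ∈ Finset.Icc 1 (n / 2), α k = m)
    (hlym : ∑ k ∈ Finset.Icc 1 (n / 2), α k / (n.choose k : ℝ) ≤ 1)
    (k₁ k₂ k₃ : ℕ) (hk₁ : k₁ ∈ Finset.Icc 1 (n / 2)) (hk₃ : k₃ ∈ Finset.Icc 1 (n / 2))
    (h12 : k₁ < k₂) (h23 : k₂ < k₃) (hgap : k₁ + 1 < k₃)
    (hpos1 : 0 < α k₁) (hpos3 : 0 < α k₃) :
    ∃ β : ℕ → ℝ, (∀ k ∈ Finset.Icc 1 (n / 2), 0 ≤ β k) ∧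
      (∑ k ∈ Finset.Icc 1 (n / 2), β k = m) ∧
      (∑ k ∈ Finset.Icc 1 (n / 2), β k / (n.choose k : ℝ) ≤ 1) ∧
      (∑ k ∈ Finset.Icc 1 (n / 2), (k : ℝ) * β k) <
        ∑ k ∈ Finset.Icc 1 (n / 2), (k : ℝ) * α k := by
  obtain ⟨h11, h1u⟩ := Finset.mem_Icc.mp hk₁
  obtain ⟨h31, h3u⟩ := Finset.mem_Icc.mp hk₃
  set S := Finset.Icc 1 (n / 2) with hS
  set f : ℕ → ℝ := fun k => ((n.choose k : ℝ))⁻¹ with hf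
  have e3 : k₃ - 1 + 1 = k₃ := by omega
  have hD1 : 0 < f k₁ - f (k₁ + 1) := by
    have := lp_aux_step n k₁ (by omega)
    simp only [hf]; linarith
  have hD3 : 0 < f (k₃ - 1) - f k₃ := by
    have := lp_aux_step n (k₃ - 1) (by omega)
    rw [e3] at this
    simp only [hf]; linarith
  have hlt : f (k₃ - 1) - f k₃ < f k₁ - f (k₁ + 1) := by
    have := lp_aux_anti n (k₃ - 1) k₁ (by omega) (by omega)
    rw [e3] at this
    simp only [hf]; exact this
  set D1 := f k₁ - f (k₁ + 1) with hD1def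
  set D3 := f (k₃ - 1) - f k₃ with hD3def
  set δ := min (α k₃) (α k₁ * D1 / D3) with hδdef
  have hδpos : 0 < δ := lt_min hpos3 (by positivity)
  have hδ3 : δ ≤ α k₃ := min_le_left _ _
  set ε := δ * D3 / D1 with hεdef
  have hεpos : 0 < ε := by positivity
  have hε1 : ε ≤ α k₁ := by
    have h1 : δ ≤ α k₁ * D1 / D3 := min_le_right _ _
    have h2 : ε ≤ (α k₁ * D1 / D3) * D3 / D1 := by
      rw [hεdef]; gcongr
    have h3 : (α k₁ * D1 / D3) * D3 / D1 = α k₁ := by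
      field_simp
    linarith
  have hεδ : ε < δ := by
    rw [hεdef, div_lt_iff₀ hD1]
    nlinarith
  have hεD : ε * D1 = δ * D3 := by
    rw [hεdef]; field_simp
  set β : ℕ → ℝ := fun k => α k + (if k = k₁ then -ε else 0) + (if k = k₁ + 1 then ε else 0)
      + (if k = k₃ then -δ else 0) + (if k = k₃ - 1 then δ else 0) with hβ
  have mem1 : k₁ ∈ S := hk₁
  have mem1' : k₁ + 1 ∈ S := Finset.mem_Icc.mpr ⟨by omega, by omega⟩
  have mem3 : k₃ ∈ S := hk₃
  have mem3' : k₃ - 1 ∈ S := Finset.mem_Icc.mpr ⟨by omega, by omega⟩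
  have key : ∀ w : ℕ → ℝ, ∑ k ∈ S, w k * β k =
      (∑ k ∈ S, w k * α k) + (-ε) * w k₁ + ε * w (k₁ + 1) + (-δ) * w k₃ + δ * w (k₃ - 1) := by
    intro w
    simp only [hβ, mul_add, mul_ite, mul_zero]
    rw [Finset.sum_add_distrib, Finset.sum_add_distrib, Finset.sum_add_distrib,
      Finset.sum_add_distrib, Finset.sum_ite_eq', Finset.sum_ite_eq', Finset.sum_ite_eq',
      Finset.sum_ite_eq', if_pos mem1, if_pos mem1', if_pos mem3, if_pos mem3']
    ring
  refine ⟨β, ?_, ?_, ?_, ?_⟩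
  · intro k hk
    have hak := hα0 k hk
    simp only [hβ]
    split_ifs
    all_goals try (exfalso; omega)
    all_goals subst_vars
    all_goals linarith
  · have h1 : ∑ k ∈ S, β k = ∑ k ∈ S, α k + -ε + ε + -δ + δ := by
      have := key (fun _ => 1); simpa using this
    rw [h1, hsum]; ring
  · have hrw : ∀ γ : ℕ → ℝ, ∑ k ∈ S, γ k / (n.choose k : ℝ) = ∑ k ∈ S, f k * γ k := by
      intro γ
      refine Finset.sum_congr rfl fun k _ => ?_
      simp only [hf]; rw [div_eq_mul_inv, mul_comm]
    have hεD' : ε * (f k₁ - f (k₁ + 1)) = δ * (f (k₃ - 1) - f k₃) := by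
      rw [← hD1def, ← hD3def]; exact hεD
    rw [hrw β, key f, ← hrw α]
    linarith [hlym, hεD']
  · rw [key (fun k => (k : ℝ))]
    have hc3 : ((k₃ - 1 : ℕ) : ℝ) = (k₃ : ℝ) - 1 := by
      rw [Nat.cast_sub (by omega)]; norm_num
    simp only [hc3]
    push_cast
    linarith
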